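/- For every n ≥ 1 and every m ≥ 0, the number of partitions of m into parts each at most 2n, with the parts of size at most n being distinct, equals the number of partitions of m into odd parts each at most 2n-1. -/

import Mathlib

open Multiset Finset

namespace BddOddAux

/-- 2-adic valuation. -/
def v2 (a : ℕ) : ℕ := a.factorization 2

/-- odd part -/
def odp (a : ℕ) : ℕ := a / 2 ^ v2 a

lemma v2_odp_eq {a : ℕ} (ha : a ≠ 0) : 2 ^ v2 a * odp a = a :=
  Nat.ordProj_mul_ordCompl_eq_self a 2

lemma odp_pos {a : ℕ} (ha : a ≠ 0) : 0 < odp a := Nat.ordCompl_pos 2 ha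

lemma odp_le (a : ℕ) : odp a ≤ a := Nat.ordCompl_le a 2

lemma odp_odd {a : ℕ} (ha : a ≠ 0) : Odd (odp a) := by
  have h := Nat.not_dvd_ordCompl Nat.prime_two ha
  rw [Nat.two_dvd_ne_zero] at h
  rw [Nat.odd_iff]
  exact h

lemma v2_pow_mul {b : ℕ} (i : ℕ) (hb : Odd b) : v2 (2 ^ i * b) = i := by
  have hb0 : b ≠ 0 := by rintro rfl; simp [Nat.odd_iff] at hb
  have h2 : ¬ (2 ∣ b) := by
    rw [Nat.two_dvd_ne_zero, ← Nat.odd_iff]; exact hb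
  unfold v2
  rw [Nat.factorization_mul (by positivity) hb0]
  simp [Nat.Prime.factorization_pow Nat.prime_two,
    Nat.factorization_eq_zero_of_not_dvd h2]

lemma odp_pow_mul {b : ℕ} (i : ℕ) (hb : Odd b) : odp (2 ^ i * b) = b := by
  have hb0 : b ≠ 0 := by rintro rfl; simp [Nat.odd_iff] at hb
  unfold odp
  rw [v2_pow_mul i hb, Nat.mul_div_cancel_left _ (by positivity)]

lemma pow_mul_inj {i j b c : ℕ} (hb : Odd b) (hc : Odd c)
    (h : 2 ^ i * b = 2 ^ j * c) : i = j ∧ b = c := by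
  constructor
  · rw [← v2_pow_mul i hb, h, v2_pow_mul j hc]
  · rw [← odp_pow_mul i hb, h, odp_pow_mul j hc]

/-- the largest `V` with `2 ^ V * b ≤ 2 * n` (for `0 < b ≤ 2n`). -/
def Vb (n b : ℕ) : ℕ := Nat.log 2 (2 * n / b)

variable {n b : ℕ}

lemma Vb_mul_le (hb : 0 < b) (hb2 : b ≤ 2 * n) : 2 ^ Vb n b * b ≤ 2 * n := by
  have h1 : 2 * n / b ≠ 0 := by
    have := Nat.one_le_div_iff hb |>.2 hb2; omega
  have h2 := Nat.pow_log_le_self 2 h1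
  exact (Nat.le_div_iff_mul_le hb).1 h2

lemma lt_Vb_succ_mul (hb : 0 < b) : 2 * n < 2 ^ (Vb n b + 1) * b := by
  have h2 := Nat.lt_pow_succ_log_self (by norm_num : 1 < 2) (2 * n / b)
  exact (Nat.div_lt_iff_lt_mul hb).1 h2

lemma pow_mul_le_n {i : ℕ} (hb : 0 < b) (hb2 : b ≤ 2 * n) (hi : i < Vb n b) :
    2 ^ i * b ≤ n := by
  have h1 : 2 ^ (i + 1) * b ≤ 2 ^ Vb n b * b :=
    Nat.mul_le_mul_right b (Nat.pow_le_pow_right (by norm_num) hi)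
  have h2 := Vb_mul_le hb hb2
  have h3 : 2 ^ (i + 1) * b = 2 * (2 ^ i * b) := by ring
  omega

lemma n_lt_Vb_mul (hb : 0 < b) : n < 2 ^ Vb n b * b := by
  have h := lt_Vb_succ_mul (n := n) hb
  have h3 : 2 ^ (Vb n b + 1) * b = 2 * (2 ^ Vb n b * b) := by ring
  omega

lemma two_n_lt_pow_mul {j : ℕ} (hb : 0 < b) (hj : Vb n b < j) : 2 * n < 2 ^ j * b := by
  have h1 : 2 ^ (Vb n b + 1) * b ≤ 2 ^ j * b :=
    Nat.mul_le_mul_right b (Nat.pow_le_pow_right (by norm_num) hj)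
  have := lt_Vb_succ_mul (n := n) hb
  omega

lemma le_Vb_of_le {i : ℕ} (hb : 0 < b) (h : 2 ^ i * b ≤ 2 * n) : i ≤ Vb n b := by
  by_contra hc
  have h2 := two_n_lt_pow_mul (n := n) (j := i) hb (by omega)
  omega

/-! ### binary digit lemmas -/

lemma sum_dig (m k : ℕ) :
    ∑ i ∈ range k, 2 ^ i * (m / 2 ^ i % 2) = m % 2 ^ k := by
  induction k with
  | zero => simp [Nat.mod_one]
  | succ k ih =>
      rw [Finset.sum_range_succ, ih, pow_succ, Nat.mod_mul]

lemma sum_bits_lt {k : ℕ} {f : ℕ → ℕ} (hf : ∀ i < k, f i ≤ 1) :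
    ∑ i ∈ range k, 2 ^ i * f i < 2 ^ k := by
  induction k with
  | zero => simp
  | succ k ih =>
      have h1 := ih (fun i hi => hf i (by omega))
      have h2 := hf k (by omega)
      have h3 : 2 ^ k * f k ≤ 2 ^ k * 1 := Nat.mul_le_mul_left _ h2
      rw [Finset.sum_range_succ, pow_succ]
      omega

lemma digit_extract {V : ℕ} {c : ℕ → ℕ} (hc : ∀ i < V, c i ≤ 1) {j : ℕ} (hj : j < V) :
    (∑ i ∈ range (V + 1), 2 ^ i * c i) / 2 ^ j % 2 = c j := by
  set K := ∑ i ∈ Ico (j + 1) (V + 1), 2 ^ (i - (j + 1)) * c i with hK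
  have h2 : ∑ i ∈ Ico (j + 1) (V + 1), 2 ^ i * c i = 2 ^ j * (2 * K) := by
    rw [hK, Finset.mul_sum, Finset.mul_sum]
    apply Finset.sum_congr rfl
    intro i hi
    simp only [Finset.mem_Ico] at hi
    obtain ⟨d, rfl⟩ : ∃ d, i = j + 1 + d := ⟨i - (j + 1), by omega⟩
    rw [show j + 1 + d - (j + 1) = d by omega, pow_add, pow_succ]
    ring
  have hsplit : ∑ i ∈ range (V + 1), 2 ^ i * c i
      = (∑ i ∈ range j, 2 ^ i * c i) + 2 ^ j * (c j + 2 * K) := by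
    rw [Finset.range_eq_Ico,
      ← Finset.sum_Ico_consecutive (fun i => 2 ^ i * c i) (by omega : 0 ≤ j + 1)
        (by omega : j + 1 ≤ V + 1), h2, ← Finset.range_eq_Ico, Finset.sum_range_succ]
    ring
  have hA : (∑ i ∈ range j, 2 ^ i * c i) < 2 ^ j :=
    sum_bits_lt (fun i hi => hc i (by omega))
  rw [hsplit, Nat.add_mul_div_left _ _ (by positivity : 0 < 2 ^ j),
    Nat.div_eq_of_lt hA, Nat.zero_add]
  have := hc j hj
  omega

lemma digit_extract_top {V : ℕ} {c : ℕ → ℕ} (hc : ∀ i < V, c i ≤ 1) :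
    (∑ i ∈ range (V + 1), 2 ^ i * c i) / 2 ^ V = c V := by
  rw [Finset.sum_range_succ, Nat.add_mul_div_left _ _ (by positivity : 0 < 2 ^ V),
    Nat.div_eq_of_lt (sum_bits_lt hc), Nat.zero_add]


/-! ### the Glaisher map `phi` -/

/-- Glaisher map: split each part `a = 2^v * b` into `2^v` copies of the odd part `b`. -/
def phi (s : Multiset ℕ) : Multiset ℕ :=
  s.bind fun a => replicate (2 ^ v2 a) (odp a)

lemma mem_phi {s : Multiset ℕ} {x : ℕ} (hx : x ∈ phi s) :
    ∃ a ∈ s, x = odp a := by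
  rw [phi, Multiset.mem_bind] at hx
  obtain ⟨a, ha, hxa⟩ := hx
  exact ⟨a, ha, Multiset.eq_of_mem_replicate hxa⟩

lemma phi_sum {s : Multiset ℕ} (hs : ∀ a ∈ s, 0 < a) : (phi s).sum = s.sum := by
  induction s using Multiset.induction with
  | empty => simp [phi]
  | cons a s ih =>
      rw [phi, Multiset.cons_bind, Multiset.sum_add, ← phi,
        ih (fun x hx => hs x (mem_cons_of_mem hx)), Multiset.sum_cons,
        Multiset.sum_replicate, smul_eq_mul]
      have ha : a ≠ 0 := (hs a (mem_cons_self a s)).ne'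
      rw [v2_odp_eq ha]

lemma count_phi {n : ℕ} {s : Multiset ℕ} (hs : ∀ a ∈ s, 0 < a ∧ a ≤ 2 * n)
    {c : ℕ} (hc : Odd c) :
    count c (phi s) = ∑ i ∈ Finset.range (Vb n c + 1), 2 ^ i * count (2 ^ i * c) s := by
  induction s using Multiset.induction with
  | empty => simp [phi]
  | cons a s ih =>
      have ha := hs a (mem_cons_self a s)
      have ha0 : a ≠ 0 := ha.1.ne'
      rw [phi, Multiset.cons_bind, ← phi, count_add, count_replicate,
        ih (fun x hx => hs x (mem_cons_of_mem hx))]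
      simp only [count_cons]
      have key : (if odp a = c then (2 ^ v2 a : ℕ) else 0)
          = ∑ i ∈ Finset.range (Vb n c + 1), 2 ^ i * (if 2 ^ i * c = a then 1 else 0) := by
        by_cases h : odp a = c
        · have hc0 : 0 < c := h ▸ odp_pos ha0
          have haeq : 2 ^ v2 a * c = a := by rw [← h]; exact v2_odp_eq ha0
          have hva : v2 a ∈ Finset.range (Vb n c + 1) := by
            rw [Finset.mem_range]
            have := le_Vb_of_le (n := n) hc0 (haeq ▸ ha.2)
            omega
          rw [if_pos h, Finset.sum_eq_single_of_mem _ hva]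
          · rw [if_pos haeq, mul_one]
          · intro i _ hne
            rw [if_neg, mul_zero]
            intro hia
            exact hne (pow_mul_inj hc hc (by rw [hia]; exact haeq.symm)).1
        · rw [if_neg h]
          symm
          apply Finset.sum_eq_zero
          intro i _
          rw [if_neg, mul_zero]
          intro hia
          exact h (by rw [← hia, odp_pow_mul i hc])
      rw [key]
      simp only [mul_add]
      rw [Finset.sum_add_distrib]
      exact add_comm _ _

/-! ### the inverse map `psi` -/

/-- Recombination of `m` copies of an odd `b` into binary chunks `2^i * b`,
`i < Vb n b`, plus `m / 2 ^ Vb n b` copies of `2 ^ Vb n b * b`. -/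
def Fb (n b m : ℕ) : Multiset ℕ :=
  (((Finset.range (Vb n b)).filter fun i => m / 2 ^ i % 2 = 1).val.map fun i => 2 ^ i * b)
    + replicate (m / 2 ^ Vb n b) (2 ^ Vb n b * b)

lemma mem_Fb {n b m x : ℕ} (hx : x ∈ Fb n b m) : ∃ i ≤ Vb n b, x = 2 ^ i * b := by
  rw [Fb, Multiset.mem_add] at hx
  rcases hx with hx | hx
  · obtain ⟨i, hi, rfl⟩ := Multiset.mem_map.1 hx
    rw [← Finset.mem_def, Finset.mem_filter, Finset.mem_range] at hi
    exact ⟨i, by omega, rfl⟩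
  · exact ⟨Vb n b, le_rfl, Multiset.eq_of_mem_replicate hx⟩

lemma filter_pow_sum (n b m : ℕ) :
    ∑ i ∈ (Finset.range (Vb n b)).filter (fun i => m / 2 ^ i % 2 = 1), 2 ^ i = m % 2 ^ Vb n b := by
  rw [Finset.sum_filter, ← sum_dig m (Vb n b)]
  apply Finset.sum_congr rfl
  intro i _
  have := Nat.mod_two_eq_zero_or_one (m / 2 ^ i)
  rcases this with h | h <;> simp [h]

lemma sum_Fb (n b m : ℕ) : (Fb n b m).sum = m * b := by
  rw [Fb, Multiset.sum_add, Multiset.sum_replicate, smul_eq_mul]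
  have h1 : ((((Finset.range (Vb n b)).filter fun i => m / 2 ^ i % 2 = 1).val.map
      fun i => 2 ^ i * b)).sum
      = ∑ i ∈ (Finset.range (Vb n b)).filter (fun i => m / 2 ^ i % 2 = 1), 2 ^ i * b := rfl
  rw [h1, ← Finset.sum_mul, filter_pow_sum]
  have := Nat.mod_add_div m (2 ^ Vb n b)
  nlinarith [this]

lemma count_finset_val {j : ℕ} (t : Finset ℕ) :
    count j t.val = if j ∈ t then 1 else 0 := by
  by_cases hj : j ∈ t
  · rw [if_pos hj]
    have h1 : count j t.val ≤ 1 := Multiset.nodup_iff_count_le_one.1 t.nodup j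
    have h2 : 0 < count j t.val := Multiset.count_pos.2 hj
    omega
  · rw [if_neg hj, Multiset.count_eq_zero]
    exact hj

lemma count_Fb {n b m c j : ℕ} (hb : Odd b) (hc : Odd c) :
    count (2 ^ j * c) (Fb n b m) =
      if c = b then
        (if j < Vb n b then m / 2 ^ j % 2
         else if j = Vb n b then m / 2 ^ Vb n b else 0)
      else 0 := by
  have hbp : 0 < b := hb.pos
  rw [Fb, count_add, count_replicate]
  by_cases hcb : c = b
  · subst hcb
    have hinj : Function.Injective (fun i : ℕ => 2 ^ i * c) := by
      intro x y h
      simp only at h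
      have h2 := Nat.eq_of_mul_eq_mul_right hbp h
      exact Nat.pow_right_injective le_rfl h2
    have hmap := Multiset.count_map_eq_count' (fun i : ℕ => 2 ^ i * c)
      ((Finset.range (Vb n c)).filter fun i => m / 2 ^ i % 2 = 1).val hinj j
    rw [if_pos rfl, hmap, count_finset_val]
    simp only [Finset.mem_filter, Finset.mem_range]
    have hiff : (2 ^ Vb n c * c = 2 ^ j * c) ↔ j = Vb n c :=
      ⟨fun h => ((pow_mul_inj hc hc h).1).symm, fun h => by rw [h]⟩
    rw [if_congr hiff rfl rfl]
    have hdig := Nat.mod_two_eq_zero_or_one (m / 2 ^ j)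
    split_ifs <;> omega
  · rw [if_neg hcb]
    have h1 : count (2 ^ j * c)
        ((((Finset.range (Vb n b)).filter fun i => m / 2 ^ i % 2 = 1).val.map
          fun i => 2 ^ i * b)) = 0 := by
      rw [Multiset.count_eq_zero]
      intro hmem
      obtain ⟨i, _, hi⟩ := Multiset.mem_map.1 hmem
      exact hcb (pow_mul_inj hc hb hi.symm).2
    have h2 : (2 : ℕ) ^ Vb n b * b ≠ 2 ^ j * c := fun h => hcb ((pow_mul_inj hb hc h).2).symm
    rw [h1, if_neg h2, Nat.zero_add]

/-- the inverse recombination map -/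
def psi (n : ℕ) (t : Multiset ℕ) : Multiset ℕ := ∑ b ∈ t.toFinset, Fb n b (t.count b)

lemma mem_psi {n : ℕ} {t : Multiset ℕ} {x : ℕ} (hx : x ∈ psi n t) :
    ∃ b ∈ t, ∃ i ≤ Vb n b, x = 2 ^ i * b := by
  rw [psi, Multiset.mem_sum] at hx
  obtain ⟨b, hb, hxb⟩ := hx
  exact ⟨b, Multiset.mem_toFinset.1 hb, mem_Fb hxb⟩

lemma sum_finset_sum {ι : Type*} (s : Finset ι) (f : ι → Multiset ℕ) :
    (∑ i ∈ s, f i).sum = ∑ i ∈ s, (f i).sum := by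
  classical
  induction s using Finset.induction with
  | empty => simp
  | insert _ _ h ih => rw [Finset.sum_insert h, Finset.sum_insert h, Multiset.sum_add, ih]

lemma psi_sum {n : ℕ} (t : Multiset ℕ) : (psi n t).sum = t.sum := by
  rw [psi, sum_finset_sum]
  conv_rhs => rw [← Multiset.toFinset_sum_count_nsmul_eq t]
  rw [sum_finset_sum]
  apply Finset.sum_congr rfl
  intro b _
  rw [sum_Fb, Multiset.nsmul_singleton, Multiset.sum_replicate, smul_eq_mul]

lemma count_psi {n : ℕ} {t : Multiset ℕ} (ht : ∀ x ∈ t, Odd x)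
    {c j : ℕ} (hc : Odd c) :
    count (2 ^ j * c) (psi n t) =
      if j < Vb n c then t.count c / 2 ^ j % 2
      else if j = Vb n c then t.count c / 2 ^ Vb n c else 0 := by
  rw [psi, Multiset.count_sum']
  rw [Finset.sum_congr rfl (fun b hb =>
    count_Fb (ht b (Multiset.mem_toFinset.1 hb)) hc (m := t.count b) (j := j) (n := n))]
  rw [Finset.sum_ite_eq]
  by_cases hmem : c ∈ t.toFinset
  · rw [if_pos hmem]
  · rw [if_neg hmem]
    have h0 : t.count c = 0 := by
      rw [Multiset.count_eq_zero]
      exact fun h => hmem (Multiset.mem_toFinset.2 h)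
    rw [h0]
    simp only [Nat.zero_div, Nat.zero_mod]
    split_ifs <;> rfl

/-! ### round trips -/

lemma phi_add (s t : Multiset ℕ) : phi (s + t) = phi s + phi t := Multiset.add_bind s t _

lemma phi_finset_sum {ι : Type*} (s : Finset ι) (f : ι → Multiset ℕ) :
    phi (∑ i ∈ s, f i) = ∑ i ∈ s, phi (f i) := by
  classical
  induction s using Finset.induction with
  | empty => simp [phi]
  | insert _ _ h ih => rw [Finset.sum_insert h, Finset.sum_insert h, phi_add, ih]

lemma phi_Fb {n b m : ℕ} (hb : Odd b) : phi (Fb n b m) = replicate m b := by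
  have hbp : 0 < b := hb.pos
  rw [Multiset.eq_replicate]
  constructor
  · rw [phi, Multiset.card_bind, Fb, Multiset.map_add, Multiset.sum_add,
      Multiset.map_map, Multiset.map_replicate, Multiset.sum_replicate]
    have h1 : (((Finset.range (Vb n b)).filter fun i => m / 2 ^ i % 2 = 1).val.map
        ((Multiset.card ∘ fun a => replicate (2 ^ v2 a) (odp a)) ∘ fun i => 2 ^ i * b)).sum
        = ∑ i ∈ (Finset.range (Vb n b)).filter (fun i => m / 2 ^ i % 2 = 1), 2 ^ i := by
      apply Finset.sum_congr rfl
      intro i _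
      simp only [Function.comp_apply, Multiset.card_replicate]
      rw [v2_pow_mul i hb]
    rw [h1, filter_pow_sum]
    simp only [Function.comp_apply, Multiset.card_replicate, smul_eq_mul]
    rw [v2_pow_mul (Vb n b) hb]
    exact Nat.mod_add_div' m (2 ^ Vb n b)
  · intro x hx
    obtain ⟨a, ha, rfl⟩ := mem_phi hx
    obtain ⟨i, _, rfl⟩ := mem_Fb ha
    exact odp_pow_mul i hb

lemma phi_psi {n : ℕ} {t : Multiset ℕ} (ht : ∀ x ∈ t, Odd x) : phi (psi n t) = t := by
  rw [psi, phi_finset_sum]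
  conv_rhs => rw [← Multiset.toFinset_sum_count_nsmul_eq t]
  apply Finset.sum_congr rfl
  intro b hb
  rw [phi_Fb (ht b (Multiset.mem_toFinset.1 hb)), Multiset.nsmul_singleton]

lemma psi_phi {n : ℕ} {s : Multiset ℕ} (hs : ∀ a ∈ s, 0 < a ∧ a ≤ 2 * n)
    (hdist : ∀ x ∈ s, x ≤ n → s.count x ≤ 1) : psi n (phi s) = s := by
  have hodd : ∀ x ∈ phi s, Odd x := by
    intro x hx
    obtain ⟨a, ha, rfl⟩ := mem_phi hx
    exact odp_odd (hs a ha).1.ne'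
  ext x
  rcases Nat.eq_zero_or_pos x with rfl | hx0
  · rw [Multiset.count_eq_zero.2, Multiset.count_eq_zero.2]
    · exact fun h => (hs 0 h).1.ne' rfl
    · intro h
      obtain ⟨b, hb, i, _, hib⟩ := mem_psi h
      have := (hodd b hb).pos
      have h2 : (0:ℕ) < 2 ^ i * b := by positivity
      omega
  · have hx0' : x ≠ 0 := hx0.ne'
    set c := odp x with hc
    set j := v2 x with hj
    have hxeq : 2 ^ j * c = x := v2_odp_eq hx0'
    have hcodd : Odd c := odp_odd hx0'
    have hcpos : 0 < c := odp_pos hx0'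
    rw [← hxeq, count_psi hodd hcodd]
    by_cases hc2n : c ≤ 2 * n
    · rw [count_phi hs hcodd]
      have hdig : ∀ i < Vb n c, count (2 ^ i * c) s ≤ 1 := by
        intro i hi
        by_cases hmem : 2 ^ i * c ∈ s
        · exact hdist _ hmem (pow_mul_le_n hcpos hc2n hi)
        · rw [Multiset.count_eq_zero.2 hmem]; omega
      rcases Nat.lt_trichotomy j (Vb n c) with hjV | hjV | hjV
      · rw [if_pos hjV]
        exact digit_extract hdig hjV
      · rw [if_neg (by omega), if_pos hjV, hjV]
        exact digit_extract_top hdig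
      · rw [if_neg (by omega), if_neg (by omega)]
        symm
        rw [Multiset.count_eq_zero]
        intro hmem
        have h1 := (hs _ hmem).2
        have h2 := two_n_lt_pow_mul (n := n) (j := j) hcpos hjV
        omega
    · have hM : count c (phi s) = 0 := by
        rw [Multiset.count_eq_zero]
        intro hmem
        obtain ⟨a, ha, hac⟩ := mem_phi hmem
        have h1 := (hs a ha).2
        have h2 := odp_le a
        omega
      have hcount : count (2 ^ j * c) s = 0 := by
        rw [Multiset.count_eq_zero]
        intro hmem
        have h1 := (hs _ hmem).2
        have h2 : c ≤ 2 ^ j * c := Nat.le_mul_of_pos_left c (by positivity)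
        omega
      rw [hM, hcount]
      simp only [Nat.zero_div, Nat.zero_mod]
      split_ifs <;> rfl


/-! ### partitions -/

/-- image of a partition under the Glaisher map -/
def toOdd {m : ℕ} (p : Nat.Partition m) : Nat.Partition m where
  parts := phi p.parts
  parts_pos := by
    intro i hi
    obtain ⟨a, ha, rfl⟩ := mem_phi hi
    exact odp_pos (p.parts_pos ha).ne'
  parts_sum := by rw [phi_sum (fun a ha => p.parts_pos ha), p.parts_sum]

/-- image of a partition under the inverse map -/
def toBdd (n : ℕ) {m : ℕ} (q : Nat.Partition m) (hq : ∀ x ∈ q.parts, Odd x) :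
    Nat.Partition m where
  parts := psi n q.parts
  parts_pos := by
    intro x hx
    obtain ⟨b, hb, i, _, rfl⟩ := mem_psi hx
    have := (hq b hb).pos
    positivity
  parts_sum := by rw [psi_sum, q.parts_sum]

end BddOddAux

open BddOddAux

/-- For every `n ≥ 1` and `m ≥ 0`, the number of partitions of `m`
into parts each at most `2n` with the parts of size at most `n` distinct equals
the number of partitions of `m` into odd parts each at most `2n - 1`. -/
theorem bounded_eq_odd_count (n m : ℕ) (hn : 1 ≤ n) :
    Nat.card {p : Nat.Partition m //
        (∀ x ∈ p.parts, x ≤ 2 * n) ∧ (∀ x ∈ p.parts, x ≤ n → p.parts.count x ≤ 1)} =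
    Nat.card {p : Nat.Partition m // ∀ x ∈ p.parts, Odd x ∧ x ≤ 2 * n - 1} := by
  apply Nat.card_congr
  refine ⟨fun p => ⟨toOdd p.1, ?_⟩, fun q => ⟨toBdd n q.1 (fun x hx => (q.2 x hx).1), ?_, ?_⟩,
    ?_, ?_⟩
  · -- forward conditions
    intro x hx
    obtain ⟨a, ha, rfl⟩ := mem_phi hx
    have h1 : odp a ≤ a := odp_le a
    have h2 := p.2.1 a ha
    have h3 : Odd (odp a) := odp_odd (p.1.parts_pos ha).ne'
    refine ⟨h3, ?_⟩
    have h4 : odp a % 2 = 1 := Nat.odd_iff.1 h3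
    omega
  · -- bound condition for psi
    intro x hx
    obtain ⟨b, hb, i, hi, rfl⟩ := mem_psi hx
    have hob := q.2 b hb
    have hbp : 0 < b := hob.1.pos
    have hb2n : b ≤ 2 * n := by omega
    have h1 : 2 ^ i * b ≤ 2 ^ Vb n b * b :=
      Nat.mul_le_mul_right b (Nat.pow_le_pow_right (by norm_num) hi)
    have h2 := Vb_mul_le hbp hb2n
    omega
  · -- distinctness condition for psi
    intro x hx hxn
    obtain ⟨b, hb, i, hi, rfl⟩ := mem_psi hx
    have hob := (q.2 b hb).1
    have hbp : 0 < b := hob.pos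
    have hcnt := count_psi (n := n) (t := q.1.parts) (fun y hy => (q.2 y hy).1) hob (j := i)
    have hiV : i < Vb n b := by
      rcases Nat.lt_or_ge i (Vb n b) with h | h
      · exact h
      · exfalso
        have h1 : 2 ^ Vb n b * b ≤ 2 ^ i * b :=
          Nat.mul_le_mul_right b (Nat.pow_le_pow_right (by norm_num) h)
        have h2 := n_lt_Vb_mul (n := n) (b := b) hbp
        omega
    show count (2 ^ i * b) (psi n q.1.parts) ≤ 1
    rw [hcnt, if_pos hiV]
    have := Nat.mod_two_eq_zero_or_one (Multiset.count b q.1.parts / 2 ^ i)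
    omega
  · -- left inverse
    rintro ⟨p, hp⟩
    apply Subtype.ext
    apply Nat.Partition.ext
    show psi n (phi p.parts) = p.parts
    exact psi_phi (fun a ha => ⟨p.parts_pos ha, hp.1 a ha⟩) hp.2
  · -- right inverse
    rintro ⟨q, hq⟩
    apply Subtype.ext
    apply Nat.Partition.ext
    show phi (psi n q.parts) = q.parts
    exact phi_psi (fun x hx => (hq x hx).1)
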